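/- Fix reals L < U, t > 0, ε > 0 and θ > 0, and set μ = U − L + 2t. Let x_1, x_2 ∈ [L, U] with d_E = |x_1 − x_2| ≤ 2t, let d_H be the Hamming distance between the DPBV encodings of x_1 and x_2, and define the estimator d̂_E = (μ/(2s)) · ((e^ε + 1)/(e^ε − 1))^2 · d_H − μ e^ε/(e^ε − 1)^2. Then Pr[ |d̂_E − d_E| ≥ θμ ] ≤ 2 · exp( −8 · ((e^ε − 1)/(e^ε + 1))^4 · s · θ^2 ). -/

import Mathlib

open MeasureTheory ProbabilityTheory Real

/-- The BV hash: `h_{r,t}(x) = 1` if `x ∈ [r - t, r + t]` and `0` otherwise. -/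
noncomputable def bvHash (t r x : ℝ) : ℕ := if x ∈ Set.Icc (r - t) (r + t) then 1 else 0

/-- The uniform probability measure on the interval `[a, b]`. -/
noncomputable def uniformIcc (a b : ℝ) : Measure ℝ :=
  (ENNReal.ofReal (b - a))⁻¹ • (volume.restrict (Set.Icc a b))

/-- A DPBV bit: the BV hash bit `bvHash t r x` XOR-ed with the flip indicator `flip ∈ {0,1}`. -/
noncomputable def dpbvBit (t r x flip : ℝ) : ℕ :=
  if flip = 1 then 1 - bvHash t r x else bvHash t r x

/-- The (random) Hamming distance between the DPBV encodings of `x₁` (with flips `f`) and `x₂`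
(with flips `g`): the number of coordinates in which they differ. -/
noncomputable def dpbvHammingDist (t : ℝ) {s : ℕ} {Ω : Type*}
    (r f g : Fin s → Ω → ℝ) (x₁ x₂ : ℝ) (ω : Ω) : ℕ :=
  (Finset.univ.filter fun i =>
    dpbvBit t (r i ω) x₁ (f i ω) ≠ dpbvBit t (r i ω) x₂ (g i ω)).card

/-- The (random) DPBV Euclidean distance estimator
`d̂_E = (μ/(2s)) · ((e^ε + 1)/(e^ε − 1))² · d_H − μ·e^ε/(e^ε − 1)²`. -/
noncomputable def dpbvEstimator (t μ ε : ℝ) {s : ℕ} {Ω : Type*}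
    (r f g : Fin s → Ω → ℝ) (x₁ x₂ : ℝ) (ω : Ω) : ℝ :=
  μ / (2 * s) * ((exp ε + 1) / (exp ε - 1)) ^ 2 * (dpbvHammingDist t r f g x₁ x₂ ω : ℝ)
    - μ * exp ε / (exp ε - 1) ^ 2

/-! ### Auxiliary: Hoeffding's lemma for Bernoulli-type variables -/

lemma dpbv_quarter_bound (w uu : ℝ) (hu : 0 < uu) :
    0 ≤ 1 / 4 - (w * uu - w * w) / uu ^ 2 := by
  rw [sub_nonneg, div_le_iff₀ (by positivity)]
  nlinarith [sq_nonneg (2 * w - uu)]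

lemma dpbv_bernoulli_u_pos {p : ℝ} (h0 : 0 ≤ p) (h1 : p ≤ 1) (x : ℝ) :
    0 < 1 - p + p * exp x := by
  rcases eq_or_lt_of_le h1 with h | h
  · have := exp_pos x; rw [← h]; nlinarith
  · nlinarith [exp_pos x, mul_nonneg h0 (exp_pos x).le]

lemma dpbv_bernoulli_mgf_le {p : ℝ} (h0 : 0 ≤ p) (h1 : p ≤ 1) (l : ℝ) :
    (1 - p) * exp (-(l * p)) + p * exp (l * (1 - p)) ≤ exp (l ^ 2 / 8) := by
  set u : ℝ → ℝ := fun x => 1 - p + p * exp x with hu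
  have hupos : ∀ x, 0 < u x := dpbv_bernoulli_u_pos h0 h1
  set F : ℝ → ℝ := fun x => x * p + x ^ 2 / 8 - log (u x) with hF
  set F' : ℝ → ℝ := fun x => p + x / 4 - p * exp x / u x with hF'
  have hder : ∀ x, HasDerivAt F (F' x) x := by
    intro x
    have h1' : HasDerivAt u (p * exp x) x := by
      exact (((hasDerivAt_exp x).const_mul p).const_add (1 - p))
    have h2 : HasDerivAt (fun x => log (u x)) (p * exp x / u x) x :=
      h1'.log (hupos x).ne'
    have h3 : HasDerivAt (fun x : ℝ => x * p + x ^ 2 / 8) (p + x / 4) x := by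
      have := ((hasDerivAt_id x).mul_const p).add (((hasDerivAt_pow 2 x)).div_const 8)
      refine this.congr_deriv ?_
      norm_num
      ring
    exact h3.sub h2
  have hder' : ∀ x, HasDerivAt F'
      (1 / 4 - (p * exp x * u x - p * exp x * (p * exp x)) / (u x) ^ 2) x := by
    intro x
    have h1' : HasDerivAt u (p * exp x) x := by
      exact (((hasDerivAt_exp x).const_mul p).const_add (1 - p))
    have h2 : HasDerivAt (fun x => p * exp x) (p * exp x) x := (hasDerivAt_exp x).const_mul p
    have h3 : HasDerivAt (fun x => p * exp x / u x)
        ((p * exp x * u x - p * exp x * (p * exp x)) / (u x) ^ 2) x :=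
      h2.div h1' (hupos x).ne'
    have h4 : HasDerivAt (fun x : ℝ => p + x / 4) (1 / 4) x := by
      simpa using ((hasDerivAt_id x).div_const 4).const_add p
    exact h4.sub h3
  have hsec : ∀ x, 0 ≤ 1 / 4 - (p * exp x * u x - p * exp x * (p * exp x)) / (u x) ^ 2 := by
    intro x
    have h := dpbv_quarter_bound (p * exp x) (u x) (hupos x)
    convert h using 3 <;> ring
  have hmono : Monotone F' := by
    refine monotone_of_deriv_nonneg (fun x => (hder' x).differentiableAt) ?_
    intro x
    rw [(hder' x).deriv]
    exact hsec x
  have hF'0 : F' 0 = 0 := by simp [hF', hu]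
  have hF0 : F 0 = 0 := by simp [hF, hu]
  have hFnonneg : ∀ x, 0 ≤ F x := by
    intro x
    have hcont : ∀ y, ContinuousAt F y := fun y => (hder y).continuousAt
    rcases le_total 0 x with hx | hx
    · have hm : MonotoneOn F (Set.Ici 0) := by
        refine monotoneOn_of_deriv_nonneg (convex_Ici 0)
          (fun y _ => (hcont y).continuousWithinAt)
          (fun y _ => (hder y).differentiableAt.differentiableWithinAt) ?_
        intro y hy
        rw [interior_Ici] at hy
        rw [(hder y).deriv, ← hF'0]
        exact hmono (le_of_lt hy)
      have := hm (Set.self_mem_Ici) (Set.mem_Ici.mpr hx) hx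
      linarith [hF0 ▸ this]
    · have hm : AntitoneOn F (Set.Iic 0) := by
        refine antitoneOn_of_deriv_nonpos (convex_Iic 0)
          (fun y _ => (hcont y).continuousWithinAt)
          (fun y _ => (hder y).differentiableAt.differentiableWithinAt) ?_
        intro y hy
        rw [interior_Iic] at hy
        rw [(hder y).deriv, ← hF'0]
        exact hmono (le_of_lt hy)
      have := hm (Set.mem_Iic.mpr hx) (Set.self_mem_Iic) hx
      linarith [hF0 ▸ this]
  have key := hFnonneg l
  have hlog : log (u l) ≤ l * p + l ^ 2 / 8 := by simp only [hF] at key; linarith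
  have hle : u l ≤ exp (l * p + l ^ 2 / 8) := by
    rw [← exp_log (hupos l)]
    exact exp_le_exp.mpr hlog
  have heq : (1 - p) * exp (-(l * p)) + p * exp (l * (1 - p)) = exp (-(l * p)) * u l := by
    have h5 : l * (1 - p) = -(l * p) + l := by ring
    rw [h5, exp_add]
    simp only [hu]
    ring
  rw [heq]
  calc exp (-(l * p)) * u l ≤ exp (-(l * p)) * exp (l * p + l ^ 2 / 8) :=
        mul_le_mul_of_nonneg_left hle (exp_pos _).le
    _ = exp (l ^ 2 / 8) := by rw [← exp_add]; ring_nf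

/-! ### Auxiliary: Hoeffding's inequality for 0/1-valued independent variables -/

section Hoeffding
variable {Ω : Type*} [MeasurableSpace Ω] (P : Measure Ω) [IsProbabilityMeasure P]

lemma dpbv_integrable_exp_of_bounded {X : Ω → ℝ} (hX : Measurable X) {C : ℝ}
    (hC : ∀ ω, X ω ≤ C) : Integrable (fun ω => exp (X ω)) P := by
  refine Integrable.mono' (integrable_const (exp C)) hX.exp.aestronglyMeasurable
    (ae_of_all _ fun ω => ?_)
  rw [norm_of_nonneg (exp_pos _).le]
  exact exp_le_exp.mpr (hC ω)

lemma dpbv_hoeffding_one_side {s : ℕ} (Y : Fin s → Ω → ℝ)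
    (hmeas : ∀ i, Measurable (Y i)) (h01 : ∀ i ω, Y i ω = 0 ∨ Y i ω = 1)
    {p : ℝ} (hp0 : 0 ≤ p) (hp1 : p ≤ 1)
    (hmean : ∀ i, ∫ ω, Y i ω ∂P = p)
    (hind : iIndepFun (m := fun _ => inferInstance) Y P) {δ : ℝ} (hδ : 0 < δ)
    (e : ℝ) (he : e = 1 ∨ e = -1) :
    P {ω | (s : ℝ) * δ ≤ ∑ i, e * (Y i ω - p)} ≤ ENNReal.ofReal (exp (-2 * s * δ ^ 2)) := by
  classical
  set Z : Fin s → Ω → ℝ := fun i ω => e * (Y i ω - p) with hZ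
  have hZmeas : ∀ i, Measurable (Z i) := fun i => ((hmeas i).sub measurable_const).const_mul e
  have hZind : iIndepFun (m := fun _ => inferInstance) Z P := by
    have := hind.comp (fun _ (x : ℝ) => e * (x - p))
      (fun _ => (measurable_id.sub measurable_const).const_mul e)
    exact this
  have he1 : |e| = 1 := by rcases he with h | h <;> simp [h]
  have hZbdd : ∀ i ω, |Z i ω| ≤ 1 := by
    intro i ω
    rw [hZ]
    simp only [abs_mul, he1, one_mul]
    rcases h01 i ω with h | h <;> rw [h] <;> rw [abs_le] <;> constructor <;> linarith
  have hmgf : ∀ (t : ℝ) (i : Fin s), mgf (Z i) P t ≤ exp (t ^ 2 / 8) := by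
    intro t i
    have hptw : ∀ ω, exp (t * Z i ω)
        = exp (-(t * e * p)) + Y i ω * (exp (t * e * (1 - p)) - exp (-(t * e * p))) := by
      intro ω
      rcases h01 i ω with h | h <;> rw [hZ] <;> simp only [h] <;> ring_nf
    have : mgf (Z i) P t = (1 - p) * exp (-(t * e * p)) + p * exp ((t * e) * (1 - p)) := by
      rw [mgf]
      rw [integral_congr_ae (ae_of_all _ hptw)]
      rw [integral_add (integrable_const _) (Integrable.mul_const (Integrable.mono' (integrable_const 1)
        (hmeas i).aestronglyMeasurable
        (ae_of_all _ fun ω => by rcases h01 i ω with h | h <;> simp [h])) _)]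
      · rw [integral_const, integral_mul_const, hmean i]
        simp
        ring
    rw [this]
    calc (1 - p) * exp (-(t * e * p)) + p * exp ((t * e) * (1 - p))
        ≤ exp ((t * e) ^ 2 / 8) := dpbv_bernoulli_mgf_le hp0 hp1 (t * e)
      _ = exp (t ^ 2 / 8) := by rw [mul_pow]; rcases he with h | h <;> norm_num [h]
  set X : Ω → ℝ := fun ω => ∑ i, Z i ω with hX
  have hXsum : X = ∑ i, Z i := by ext ω; simp [hX, Finset.sum_apply]
  have hXmeas : Measurable X := by
    apply Finset.measurable_sum
    exact fun i _ => hZmeas i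
  have hintexp : ∀ t : ℝ, Integrable (fun ω => exp (t * X ω)) P := by
    intro t
    refine dpbv_integrable_exp_of_bounded P ((hXmeas.const_mul t)) (C := |t| * s) fun ω => ?_
    calc t * X ω ≤ |t * X ω| := le_abs_self _
      _ = |t| * |X ω| := abs_mul _ _
      _ ≤ |t| * s := by
          refine mul_le_mul_of_nonneg_left ?_ (abs_nonneg t)
          calc |X ω| ≤ ∑ i, |Z i ω| := Finset.abs_sum_le_sum_abs _ _
            _ ≤ ∑ _i : Fin s, (1:ℝ) := Finset.sum_le_sum fun i _ => hZbdd i ω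
            _ = s := by simp
  have hchern := measure_ge_le_exp_mul_mgf (μ := P) (X := X) ((s : ℝ) * δ) (t := 4 * δ)
    (by positivity) (hintexp (4 * δ))
  have hmgfsum : mgf X P (4 * δ) ≤ exp (2 * s * δ ^ 2) := by
    rw [hXsum, hZind.mgf_sum hZmeas]
    calc ∏ i : Fin s, mgf (Z i) P (4 * δ)
        ≤ ∏ _i : Fin s, exp ((4 * δ) ^ 2 / 8) :=
          Finset.prod_le_prod (fun i _ => mgf_nonneg) (fun i _ => hmgf _ i)
      _ = exp (2 * s * δ ^ 2) := by
          rw [Finset.prod_const, ← exp_nat_mul]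
          norm_num
          ring_nf
  have hbound : (P {ω | (s : ℝ) * δ ≤ X ω}).toReal ≤ exp (-2 * s * δ ^ 2) := by
    calc (P {ω | (s : ℝ) * δ ≤ X ω}).toReal
        ≤ exp (-(4 * δ) * ((s : ℝ) * δ)) * mgf X P (4 * δ) := hchern
      _ ≤ exp (-(4 * δ) * ((s : ℝ) * δ)) * exp (2 * s * δ ^ 2) :=
          mul_le_mul_of_nonneg_left hmgfsum (exp_pos _).le
      _ = exp (-2 * s * δ ^ 2) := by rw [← exp_add]; ring_nf
  rw [← ENNReal.ofReal_toReal (measure_ne_top P _)]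
  exact ENNReal.ofReal_le_ofReal hbound

lemma dpbv_hoeffding_two_side {s : ℕ} (Y : Fin s → Ω → ℝ)
    (hmeas : ∀ i, Measurable (Y i)) (h01 : ∀ i ω, Y i ω = 0 ∨ Y i ω = 1)
    {p : ℝ} (hp0 : 0 ≤ p) (hp1 : p ≤ 1)
    (hmean : ∀ i, ∫ ω, Y i ω ∂P = p)
    (hind : iIndepFun (m := fun _ => inferInstance) Y P) {δ : ℝ} (hδ : 0 < δ) :
    P {ω | (s : ℝ) * δ ≤ |(∑ i, Y i ω) - s * p|} ≤
      ENNReal.ofReal (2 * exp (-2 * s * δ ^ 2)) := by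
  have hsub : {ω | (s : ℝ) * δ ≤ |(∑ i, Y i ω) - s * p|} ⊆
      {ω | (s : ℝ) * δ ≤ ∑ i, 1 * (Y i ω - p)} ∪ {ω | (s : ℝ) * δ ≤ ∑ i, (-1) * (Y i ω - p)} := by
    intro ω hω
    simp only [Set.mem_setOf_eq, Set.mem_union] at *
    have hsum : ∑ i, (1:ℝ) * (Y i ω - p) = (∑ i, Y i ω) - s * p := by
      simp only [one_mul]
      rw [Finset.sum_sub_distrib]
      simp [mul_comm]
    have hsum2 : ∑ i, (-1:ℝ) * (Y i ω - p) = -((∑ i, Y i ω) - s * p) := by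
      rw [← hsum, ← Finset.sum_neg_distrib]
      congr 1 with i
      ring
    rcases abs_cases ((∑ i, Y i ω) - s * p) with ⟨h1, _⟩ | ⟨h1, _⟩
    · left; rw [hsum]; linarith
    · right; rw [hsum2]; linarith
  calc P {ω | (s : ℝ) * δ ≤ |(∑ i, Y i ω) - s * p|}
      ≤ P ({ω | (s : ℝ) * δ ≤ ∑ i, 1 * (Y i ω - p)} ∪
          {ω | (s : ℝ) * δ ≤ ∑ i, (-1) * (Y i ω - p)}) := measure_mono hsub
    _ ≤ P {ω | (s : ℝ) * δ ≤ ∑ i, 1 * (Y i ω - p)} +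
        P {ω | (s : ℝ) * δ ≤ ∑ i, (-1) * (Y i ω - p)} := measure_union_le _ _
    _ ≤ ENNReal.ofReal (exp (-2 * s * δ ^ 2)) + ENNReal.ofReal (exp (-2 * s * δ ^ 2)) := by
        gcongr
        · exact dpbv_hoeffding_one_side P Y hmeas h01 hp0 hp1 hmean hind hδ 1 (Or.inl rfl)
        · exact dpbv_hoeffding_one_side P Y hmeas h01 hp0 hp1 hmean hind hδ (-1) (Or.inr rfl)
    _ = ENNReal.ofReal (2 * exp (-2 * s * δ ^ 2)) := by
        rw [← ENNReal.ofReal_add (exp_pos _).le (exp_pos _).le]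
        ring_nf

end Hoeffding

/-! ### Auxiliary: independence grouping via π-systems of triple blocks -/

section Grouping
open MeasurableSpace
variable {Ω : Type*} [MeasurableSpace Ω] {P : Measure Ω} {n : ℕ}

/-- The π-system of "triple blocks" for index `i`. -/
def tripleBlocks (r f g : Fin n → Ω → ℝ) (i : Fin n) : Set (Set Ω) :=
  {u | ∃ S T V : Set ℝ, MeasurableSet S ∧ MeasurableSet T ∧ MeasurableSet V ∧
    u = r i ⁻¹' S ∩ f i ⁻¹' T ∩ g i ⁻¹' V}

omit [MeasurableSpace Ω] in
lemma isPiSystem_tripleBlocks (r f g : Fin n → Ω → ℝ) (i : Fin n) :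
    IsPiSystem (tripleBlocks r f g i) := by
  rintro u ⟨S, T, V, hS, hT, hV, rfl⟩ u' ⟨S', T', V', hS', hT', hV', rfl⟩ -
  refine ⟨S ∩ S', T ∩ T', V ∩ V', hS.inter hS', hT.inter hT', hV.inter hV', ?_⟩
  simp only [Set.preimage_inter]
  ext ω; simp only [Set.mem_inter_iff]; tauto

lemma triple_product (r f g : Fin n → Ω → ℝ)
    (hindep : iIndepFun (m := fun _ : Fin n ⊕ (Fin n ⊕ Fin n) =>
      (inferInstance : MeasurableSpace ℝ)) (Sum.elim r (Sum.elim f g)) P)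
    (i : Fin n) {S T V : Set ℝ} (hS : MeasurableSet S) (hT : MeasurableSet T)
    (hV : MeasurableSet V) :
    P (r i ⁻¹' S ∩ f i ⁻¹' T ∩ g i ⁻¹' V)
      = P (r i ⁻¹' S) * P (f i ⁻¹' T) * P (g i ⁻¹' V) := by
  classical
  set sets : Fin n ⊕ (Fin n ⊕ Fin n) → Set ℝ :=
    Sum.elim (fun _ => S) (Sum.elim (fun _ => T) (fun _ => V)) with hsets
  have key := hindep.measure_inter_preimage_eq_mul
    ({Sum.inl i, Sum.inr (Sum.inl i), Sum.inr (Sum.inr i)} : Finset _) (sets := sets)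
    (by rintro (j | j | j) hj <;> simpa [hsets] using (by assumption : _))
  have h1 : (⋂ j ∈ ({Sum.inl i, Sum.inr (Sum.inl i), Sum.inr (Sum.inr i)} : Finset
      (Fin n ⊕ (Fin n ⊕ Fin n))), Sum.elim r (Sum.elim f g) j ⁻¹' sets j)
      = r i ⁻¹' S ∩ f i ⁻¹' T ∩ g i ⁻¹' V := by
    simp [hsets, Set.inter_assoc]
  have h2 : (∏ j ∈ ({Sum.inl i, Sum.inr (Sum.inl i), Sum.inr (Sum.inr i)} : Finset
      (Fin n ⊕ (Fin n ⊕ Fin n))), P (Sum.elim r (Sum.elim f g) j ⁻¹' sets j))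
      = P (r i ⁻¹' S) * P (f i ⁻¹' T) * P (g i ⁻¹' V) := by
    rw [Finset.prod_insert (by simp), Finset.prod_insert (by simp), Finset.prod_singleton]
    simp [hsets, mul_assoc]
  rw [h1, h2] at key
  exact key

lemma iIndepSets_tripleBlocks (r f g : Fin n → Ω → ℝ)
    (hindep : iIndepFun (m := fun _ : Fin n ⊕ (Fin n ⊕ Fin n) =>
      (inferInstance : MeasurableSpace ℝ)) (Sum.elim r (Sum.elim f g)) P) :
    iIndepSets (tripleBlocks r f g) P := by
  classical
  rw [iIndepSets_iff]
  intro Q u hu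
  choose! S' T' V' hS' hT' hV' hueq using hu
  set X := Sum.elim r (Sum.elim f g) with hX
  set sets : Fin n ⊕ (Fin n ⊕ Fin n) → Set ℝ :=
    Sum.elim S' (Sum.elim T' V') with hsets
  set bigQ : Finset (Fin n ⊕ (Fin n ⊕ Fin n)) :=
    Q.image Sum.inl ∪ (Q.image (Sum.inr ∘ Sum.inl) ∪ Q.image (Sum.inr ∘ Sum.inr)) with hbigQ
  have hmem : ∀ j ∈ bigQ, MeasurableSet (sets j) := by
    intro j hj
    simp only [hbigQ, Finset.mem_union, Finset.mem_image, Function.comp] at hj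
    rcases hj with ⟨a, ha, rfl⟩ | ⟨a, ha, rfl⟩ | ⟨a, ha, rfl⟩
    · exact hS' a ha
    · exact hT' a ha
    · exact hV' a ha
  have key := hindep.measure_inter_preimage_eq_mul bigQ hmem
  have h1 : (⋂ j ∈ bigQ, X j ⁻¹' sets j) = ⋂ i ∈ Q, u i := by
    ext ω
    simp only [Set.mem_iInter, hbigQ, Finset.mem_union, Finset.mem_image, Function.comp]
    constructor
    · intro h i hi
      rw [hueq i hi]
      exact ⟨⟨h (Sum.inl i) (Or.inl ⟨i, hi, rfl⟩),
        h (Sum.inr (Sum.inl i)) (Or.inr (Or.inl ⟨i, hi, rfl⟩))⟩,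
        h (Sum.inr (Sum.inr i)) (Or.inr (Or.inr ⟨i, hi, rfl⟩))⟩
    · rintro h j (⟨a, ha, rfl⟩ | ⟨a, ha, rfl⟩ | ⟨a, ha, rfl⟩)
      · have := h a ha; rw [hueq a ha] at this; exact this.1.1
      · have := h a ha; rw [hueq a ha] at this; exact this.1.2
      · have := h a ha; rw [hueq a ha] at this; exact this.2
  have hdisj1 : Disjoint (Q.image (Sum.inl : Fin n → Fin n ⊕ (Fin n ⊕ Fin n)))
      (Q.image (Sum.inr ∘ Sum.inl) ∪ Q.image (Sum.inr ∘ Sum.inr)) := by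
    simp [Finset.disjoint_left]
  have hdisj2 : Disjoint (Q.image ((Sum.inr ∘ Sum.inl) : Fin n → Fin n ⊕ (Fin n ⊕ Fin n)))
      (Q.image (Sum.inr ∘ Sum.inr)) := by
    simp [Finset.disjoint_left]
  have h2 : (∏ j ∈ bigQ, P (X j ⁻¹' sets j)) = ∏ i ∈ Q, P (u i) := by
    rw [hbigQ, Finset.prod_union hdisj1, Finset.prod_union hdisj2]
    rw [Finset.prod_image (fun a _ b _ h => Sum.inl_injective h),
      Finset.prod_image (fun a _ b _ h => Sum.inr_injective (by exact h) |> Sum.inl_injective),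
      Finset.prod_image (fun a _ b _ h => Sum.inr_injective (by exact h) |> Sum.inr_injective)]
    rw [← Finset.prod_mul_distrib, ← Finset.prod_mul_distrib]
    refine Finset.prod_congr rfl fun i hi => ?_
    rw [hueq i hi, triple_product r f g hindep i (hS' i hi) (hT' i hi) (hV' i hi)]
    simp [hX, hsets, mul_assoc]
  rw [h1, h2] at key
  exact key

/-- Functions measurable w.r.t. the σ-algebras generated by the triple blocks are independent. -/
lemma iIndepFun_of_tripleBlocks (r f g : Fin n → Ω → ℝ)
    (hr : ∀ i, Measurable (r i)) (hf : ∀ i, Measurable (f i)) (hg : ∀ i, Measurable (g i))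
    (hindep : iIndepFun (m := fun _ : Fin n ⊕ (Fin n ⊕ Fin n) =>
      (inferInstance : MeasurableSpace ℝ)) (Sum.elim r (Sum.elim f g)) P)
    (Y : Fin n → Ω → ℝ)
    (hY : ∀ i, Measurable[generateFrom (tripleBlocks r f g i)] (Y i)) :
    iIndepFun (m := fun _ : Fin n => (inferInstance : MeasurableSpace ℝ)) Y P := by
  have hle : ∀ i, generateFrom (tripleBlocks r f g i) ≤ (inferInstance : MeasurableSpace Ω) := by
    intro i
    refine generateFrom_le ?_
    rintro u ⟨S, T, V, hS, hT, hV, rfl⟩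
    exact (((hr i) hS).inter ((hf i) hT)).inter ((hg i) hV)
  have hindepσ : iIndep (fun i => generateFrom (tripleBlocks r f g i)) P :=
    iIndepSets.iIndep (m := fun i => generateFrom (tripleBlocks r f g i)) hle _
      (isPiSystem_tripleBlocks r f g) (fun i => rfl) (iIndepSets_tripleBlocks r f g hindep)
  rw [iIndepFun_iff_iIndep]
  rw [iIndep_iff] at hindepσ ⊢
  intro Q u hu
  exact hindepσ Q fun i hi => (hY i).comap_le _ (hu i hi)

end Grouping

/-! ### Auxiliary: the uniform measure of the hash-disagreement set -/

lemma bvHash_mem (t a x : ℝ) : bvHash t a x = if a ∈ Set.Icc (x - t) (x + t) then 1 else 0 := by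
  unfold bvHash
  congr 1
  simp only [Set.mem_Icc, eq_iff_iff]
  constructor <;> rintro ⟨h1, h2⟩ <;> constructor <;> linarith

lemma hashDiff_eq (t x₁ x₂ : ℝ) :
    {a : ℝ | bvHash t a x₁ ≠ bvHash t a x₂}
      = (Set.Icc (x₁ - t) (x₁ + t) \ Set.Icc (x₂ - t) (x₂ + t))
        ∪ (Set.Icc (x₂ - t) (x₂ + t) \ Set.Icc (x₁ - t) (x₁ + t)) := by
  ext a
  simp only [Set.mem_setOf_eq, bvHash_mem, Set.mem_union, Set.mem_diff]
  by_cases h1 : a ∈ Set.Icc (x₁ - t) (x₁ + t) <;>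
    by_cases h2 : a ∈ Set.Icc (x₂ - t) (x₂ + t) <;> simp [h1, h2]

lemma volume_hashDiff {t : ℝ} (ht : 0 < t) {y₁ y₂ : ℝ} (h12 : y₁ ≤ y₂) (hd : y₂ - y₁ ≤ 2 * t) :
    volume ((Set.Icc (y₁ - t) (y₁ + t) \ Set.Icc (y₂ - t) (y₂ + t))
        ∪ (Set.Icc (y₂ - t) (y₂ + t) \ Set.Icc (y₁ - t) (y₁ + t)))
      = ENNReal.ofReal (2 * (y₂ - y₁)) := by
  have e1 : Set.Icc (y₁ - t) (y₁ + t) \ Set.Icc (y₂ - t) (y₂ + t)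
      = Set.Ico (y₁ - t) (y₂ - t) := by
    ext a
    simp only [Set.mem_diff, Set.mem_Icc, Set.mem_Ico, not_and_or, not_le]
    constructor
    · rintro ⟨⟨h1, h2⟩, h3 | h3⟩ <;> constructor <;> linarith
    · rintro ⟨h1, h2⟩; exact ⟨⟨h1, by linarith⟩, Or.inl (by linarith)⟩
  have e2 : Set.Icc (y₂ - t) (y₂ + t) \ Set.Icc (y₁ - t) (y₁ + t)
      = Set.Ioc (y₁ + t) (y₂ + t) := by
    ext a
    simp only [Set.mem_diff, Set.mem_Icc, Set.mem_Ioc, not_and_or, not_le]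
    constructor
    · rintro ⟨⟨h1, h2⟩, h3 | h3⟩ <;> constructor <;> linarith
    · rintro ⟨h1, h2⟩; exact ⟨⟨by linarith, h2⟩, Or.inr (by linarith)⟩
  rw [e1, e2, measure_union ?_ measurableSet_Ioc]
  · rw [Real.volume_Ico, Real.volume_Ioc]
    rw [← ENNReal.ofReal_add (by linarith) (by linarith)]
    congr 1
    ring
  · rw [Set.disjoint_left]
    intro a ha ha'
    simp only [Set.mem_Ico, Set.mem_Ioc] at ha ha'
    linarith [ha.2, ha'.1]

lemma uniformIcc_hashDiff {L U t : ℝ} (hLU : L < U) (ht : 0 < t)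
    {x₁ x₂ : ℝ} (hx₁ : x₁ ∈ Set.Icc L U) (hx₂ : x₂ ∈ Set.Icc L U) (hd : |x₁ - x₂| ≤ 2 * t) :
    uniformIcc (L - t) (U + t) {a : ℝ | bvHash t a x₁ ≠ bvHash t a x₂}
      = ENNReal.ofReal (2 * |x₁ - x₂| / (U - L + 2 * t)) := by
  obtain ⟨hL1, hU1⟩ := hx₁
  obtain ⟨hL2, hU2⟩ := hx₂
  have hμ : (0:ℝ) < U - L + 2 * t := by linarith
  have hmeasD : MeasurableSet {a : ℝ | bvHash t a x₁ ≠ bvHash t a x₂} := by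
    rw [hashDiff_eq]
    exact ((measurableSet_Icc.diff measurableSet_Icc).union
      (measurableSet_Icc.diff measurableSet_Icc))
  have hsub : {a : ℝ | bvHash t a x₁ ≠ bvHash t a x₂} ⊆ Set.Icc (L - t) (U + t) := by
    rw [hashDiff_eq]
    rintro a (⟨h, -⟩ | ⟨h, -⟩) <;> obtain ⟨h1, h2⟩ := h <;>
      exact Set.mem_Icc.mpr ⟨by linarith, by linarith⟩
  have hvol : volume {a : ℝ | bvHash t a x₁ ≠ bvHash t a x₂}
      = ENNReal.ofReal (2 * |x₁ - x₂|) := by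
    rw [hashDiff_eq]
    rcases le_total x₁ x₂ with h12 | h12
    · rw [abs_of_nonpos (by linarith),
        volume_hashDiff ht h12 (by rw [abs_sub_comm] at hd; rwa [abs_of_nonneg (by linarith)] at hd)]
      congr 1; ring
    · rw [Set.union_comm, abs_of_nonneg (by linarith),
        volume_hashDiff ht h12 (by rwa [abs_of_nonneg (by linarith)] at hd)]
  rw [uniformIcc, Measure.smul_apply, Measure.restrict_apply hmeasD,
    Set.inter_eq_self_of_subset_left hsub, hvol]
  have harea : U + t - (L - t) = U - L + 2 * t := by ring
  rw [harea, smul_eq_mul, div_eq_mul_inv,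
    ENNReal.ofReal_mul (by positivity : (0:ℝ) ≤ 2 * |x₁ - x₂|),
    ENNReal.ofReal_inv_of_pos hμ, mul_comm,
    ENNReal.ofReal_mul (by norm_num : (0:ℝ) ≤ 2)]

lemma measurableSet_hashDiff (t x₁ x₂ : ℝ) :
    MeasurableSet {a : ℝ | bvHash t a x₁ ≠ bvHash t a x₂} := by
  rw [hashDiff_eq]
  exact ((measurableSet_Icc.diff measurableSet_Icc).union
    (measurableSet_Icc.diff measurableSet_Icc))

/-! ### Auxiliary: decomposition of the bit-disagreement event -/

lemma bvHash_cases (t a x : ℝ) : bvHash t a x = 0 ∨ bvHash t a x = 1 := by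
  unfold bvHash; split <;> simp

lemma bit_diff_decomp {Ω : Type*} {n : ℕ} (t x₁ x₂ : ℝ) (r f g : Fin n → Ω → ℝ)
    (hf01 : ∀ i ω, f i ω = 0 ∨ f i ω = 1) (hg01 : ∀ i ω, g i ω = 0 ∨ g i ω = 1) (i : Fin n) :
    {ω | dpbvBit t (r i ω) x₁ (f i ω) ≠ dpbvBit t (r i ω) x₂ (g i ω)}
      = (r i ⁻¹' {a : ℝ | bvHash t a x₁ ≠ bvHash t a x₂} ∩ f i ⁻¹' {1} ∩ g i ⁻¹' {1})
        ∪ ((r i ⁻¹' {a : ℝ | bvHash t a x₁ ≠ bvHash t a x₂} ∩ f i ⁻¹' ({1}ᶜ) ∩ g i ⁻¹' ({1}ᶜ))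
        ∪ ((r i ⁻¹' {a : ℝ | bvHash t a x₁ ≠ bvHash t a x₂}ᶜ ∩ f i ⁻¹' {1} ∩ g i ⁻¹' ({1}ᶜ))
        ∪ (r i ⁻¹' {a : ℝ | bvHash t a x₁ ≠ bvHash t a x₂}ᶜ ∩ f i ⁻¹' ({1}ᶜ) ∩ g i ⁻¹' {1}))) := by
  ext ω
  have h1 := bvHash_cases t (r i ω) x₁
  have h2 := bvHash_cases t (r i ω) x₂
  simp only [Set.mem_setOf_eq, Set.mem_union, Set.mem_inter_iff, Set.mem_preimage,
    Set.mem_singleton_iff, Set.mem_compl_iff, dpbvBit]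
  rcases hf01 i ω with hb | hb <;> rcases hg01 i ω with hc | hc <;> rw [hb, hc] <;>
    rcases h1 with h1 | h1 <;> rcases h2 with h2 | h2 <;>
    simp [h1, h2]

set_option maxHeartbeats 1000000 in
/-- For `L < U`, `t > 0`, `ε > 0`, `θ > 0`, `μ = U - L + 2t`, with `r 0, …, r (s-1)` i.i.d.
uniform on `[L - t, U + t]`, flip indicators `f i, g i ∈ {0,1}` each equal to `1` with
probability `1/(e^ε + 1)`, all mutually independent, and `x₁, x₂ ∈ [L, U]` with
`d_E = |x₁ - x₂| ≤ 2t`, the estimator `d̂_E` satisfies the concentration bound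
`Pr[|d̂_E − d_E| ≥ θμ] ≤ 2 · exp(−8 · ((e^ε − 1)/(e^ε + 1))⁴ · s · θ²)`. -/
theorem dpbv_estimator_concentration
    {Ω : Type*} [MeasurableSpace Ω] (P : Measure Ω) [IsProbabilityMeasure P]
    (L U t μ ε θ : ℝ) (hLU : L < U) (ht : 0 < t) (hε : 0 < ε) (hθ : 0 < θ)
    (hμ : μ = U - L + 2 * t)
    (s : ℕ) (hs : 1 ≤ s) (r f g : Fin s → Ω → ℝ)
    (hr : ∀ i, Measurable (r i)) (hf : ∀ i, Measurable (f i)) (hg : ∀ i, Measurable (g i))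
    (hrlaw : ∀ i, Measure.map (r i) P = uniformIcc (L - t) (U + t))
    (hf01 : ∀ i ω, f i ω = 0 ∨ f i ω = 1) (hg01 : ∀ i ω, g i ω = 0 ∨ g i ω = 1)
    (hflaw : ∀ i, P {ω | f i ω = 1} = ENNReal.ofReal (1 / (exp ε + 1)))
    (hglaw : ∀ i, P {ω | g i ω = 1} = ENNReal.ofReal (1 / (exp ε + 1)))
    (hindep : iIndepFun (m := fun _ : Fin s ⊕ (Fin s ⊕ Fin s) => (inferInstance : MeasurableSpace ℝ))
      (Sum.elim r (Sum.elim f g)) P)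
    (x₁ x₂ : ℝ) (hx₁ : x₁ ∈ Set.Icc L U) (hx₂ : x₂ ∈ Set.Icc L U)
    (hd : |x₁ - x₂| ≤ 2 * t) :
    P {ω | θ * μ ≤ abs (dpbvEstimator t μ ε r f g x₁ x₂ ω - |x₁ - x₂|)}
      ≤ ENNReal.ofReal (2 * exp (-8 * ((exp ε - 1) / (exp ε + 1)) ^ 4 * s * θ ^ 2)) := by
  classical
  subst hμ
  set E := exp ε with hE
  have hE1 : 1 < E := by
    rw [hE, ← Real.exp_zero]
    exact Real.exp_lt_exp.mpr hε
  have hEm : (0:ℝ) < E - 1 := by linarith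
  have hEp : (0:ℝ) < E + 1 := by linarith
  have hμ0 : (0:ℝ) < U - L + 2 * t := by linarith
  have hs1 : (1:ℝ) ≤ (s:ℝ) := by exact_mod_cast hs
  have hs0 : (0:ℝ) < (s:ℝ) := by linarith
  set d := |x₁ - x₂| with hdd
  have hd0 : (0:ℝ) ≤ d := abs_nonneg _
  have hdUL : d ≤ U - L := by
    rw [hdd]
    exact abs_sub_le_iff.mpr ⟨by linarith [hx₁.2, hx₂.1], by linarith [hx₂.2, hx₁.1]⟩
  set p : ℝ := 1 / (E + 1) with hp
  have hp0 : 0 < p := by positivity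
  have hp1 : p < 1 := by
    rw [hp, div_lt_one hEp]; linarith
  set q : ℝ := 2 * d / (U - L + 2 * t) with hq
  have hq0 : 0 ≤ q := by positivity
  have hq1 : q ≤ 1 := by
    rw [hq, div_le_one hμ0]; linarith
  set prb : ℝ := q * (p ^ 2 + (1 - p) ^ 2) + (1 - q) * (2 * p * (1 - p)) with hprb
  have h1p : (0:ℝ) ≤ 1 - p := by linarith
  have h1q : (0:ℝ) ≤ 1 - q := by linarith
  have hAB1 : (0:ℝ) ≤ p ^ 2 + (1 - p) ^ 2 := by positivity
  have hAB2 : p ^ 2 + (1 - p) ^ 2 ≤ 1 := by nlinarith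
  have hBB1 : (0:ℝ) ≤ 2 * p * (1 - p) := by positivity
  have hBB2 : 2 * p * (1 - p) ≤ 1 := by nlinarith
  have hprb0 : 0 ≤ prb := by
    rw [hprb]
    nlinarith [mul_nonneg hq0 hAB1, mul_nonneg h1q hBB1]
  have hprb1 : prb ≤ 1 := by
    rw [hprb]
    nlinarith [mul_le_mul_of_nonneg_left hAB2 hq0, mul_le_mul_of_nonneg_left hBB2 h1q]
  set D := {a : ℝ | bvHash t a x₁ ≠ bvHash t a x₂} with hD
  have hmeasD : MeasurableSet D := measurableSet_hashDiff t x₁ x₂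
  set A : Fin s → Set Ω := fun i =>
    {ω | dpbvBit t (r i ω) x₁ (f i ω) ≠ dpbvBit t (r i ω) x₂ (g i ω)} with hA
  have hAdec : ∀ i, A i
      = (r i ⁻¹' D ∩ f i ⁻¹' {1} ∩ g i ⁻¹' {1})
        ∪ ((r i ⁻¹' D ∩ f i ⁻¹' ({1}ᶜ) ∩ g i ⁻¹' ({1}ᶜ))
        ∪ ((r i ⁻¹' Dᶜ ∩ f i ⁻¹' {1} ∩ g i ⁻¹' ({1}ᶜ))
        ∪ (r i ⁻¹' Dᶜ ∩ f i ⁻¹' ({1}ᶜ) ∩ g i ⁻¹' {1}))) :=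
    fun i => bit_diff_decomp t x₁ x₂ r f g hf01 hg01 i
  have hPrD : ∀ i, P (r i ⁻¹' D) = ENNReal.ofReal q := by
    intro i
    rw [← Measure.map_apply (hr i) hmeasD, hrlaw i, hD,
      uniformIcc_hashDiff hLU ht hx₁ hx₂ hd]
  have hPrDc : ∀ i, P (r i ⁻¹' Dᶜ) = ENNReal.ofReal (1 - q) := by
    intro i
    rw [Set.preimage_compl, measure_compl ((hr i) hmeasD) (measure_ne_top P _),
      hPrD i, measure_univ, ← ENNReal.ofReal_one, ← ENNReal.ofReal_sub _ hq0]
  have hPf1 : ∀ i, P (f i ⁻¹' ({1} : Set ℝ)) = ENNReal.ofReal p := by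
    intro i
    have h : f i ⁻¹' ({1} : Set ℝ) = {ω | f i ω = 1} := by ext ω; simp
    rw [h, hflaw i]
  have hPf1c : ∀ i, P (f i ⁻¹' (({1} : Set ℝ)ᶜ)) = ENNReal.ofReal (1 - p) := by
    intro i
    rw [Set.preimage_compl, measure_compl ((hf i) (measurableSet_singleton 1))
      (measure_ne_top P _), hPf1 i, measure_univ, ← ENNReal.ofReal_one,
      ← ENNReal.ofReal_sub _ hp0.le]
  have hPg1 : ∀ i, P (g i ⁻¹' ({1} : Set ℝ)) = ENNReal.ofReal p := by
    intro i
    have h : g i ⁻¹' ({1} : Set ℝ) = {ω | g i ω = 1} := by ext ω; simp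
    rw [h, hglaw i]
  have hPg1c : ∀ i, P (g i ⁻¹' (({1} : Set ℝ)ᶜ)) = ENNReal.ofReal (1 - p) := by
    intro i
    rw [Set.preimage_compl, measure_compl ((hg i) (measurableSet_singleton 1))
      (measure_ne_top P _), hPg1 i, measure_univ, ← ENNReal.ofReal_one,
      ← ENNReal.ofReal_sub _ hp0.le]
  have hm1 : MeasurableSet ({1} : Set ℝ) := measurableSet_singleton 1
  have hPA : ∀ i, P (A i) = ENNReal.ofReal prb := by
    intro i
    rw [hAdec i]
    rw [measure_union ?disj1 ?meas1, measure_union ?disj2 ?meas2, measure_union ?disj3 ?meas3]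
    case disj1 =>
      rw [Set.disjoint_left]
      rintro ω ⟨⟨hr1, hf1⟩, hg1⟩ (⟨⟨_, hf2⟩, _⟩ | ⟨⟨hr2, _⟩, _⟩ | ⟨⟨hr2, _⟩, _⟩)
      · exact hf2 hf1
      · exact hr2 hr1
      · exact hr2 hr1
    case disj2 =>
      rw [Set.disjoint_left]
      rintro ω ⟨⟨hr1, hf1⟩, hg1⟩ (⟨⟨hr2, _⟩, _⟩ | ⟨⟨hr2, _⟩, _⟩)
      · exact hr2 hr1
      · exact hr2 hr1
    case disj3 =>
      rw [Set.disjoint_left]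
      rintro ω ⟨⟨hr1, hf1⟩, hg1⟩ ⟨⟨_, hf2⟩, _⟩
      exact hf2 hf1
    case meas1 =>
      refine MeasurableSet.union ?_ (MeasurableSet.union ?_ ?_)
      · exact (((hr i) hmeasD).inter ((hf i) hm1.compl)).inter ((hg i) hm1.compl)
      · exact (((hr i) hmeasD.compl).inter ((hf i) hm1)).inter ((hg i) hm1.compl)
      · exact (((hr i) hmeasD.compl).inter ((hf i) hm1.compl)).inter ((hg i) hm1)
    case meas2 =>
      refine MeasurableSet.union ?_ ?_
      · exact (((hr i) hmeasD.compl).inter ((hf i) hm1)).inter ((hg i) hm1.compl)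
      · exact (((hr i) hmeasD.compl).inter ((hf i) hm1.compl)).inter ((hg i) hm1)
    case meas3 =>
      exact (((hr i) hmeasD.compl).inter ((hf i) hm1.compl)).inter ((hg i) hm1)
    rw [triple_product r f g hindep i hmeasD hm1 hm1,
      triple_product r f g hindep i hmeasD hm1.compl hm1.compl,
      triple_product r f g hindep i hmeasD.compl hm1 hm1.compl,
      triple_product r f g hindep i hmeasD.compl hm1.compl hm1,
      hPrD i, hPrDc i, hPf1 i, hPf1c i, hPg1 i, hPg1c i]
    have e1 : ENNReal.ofReal q * ENNReal.ofReal p * ENNReal.ofReal p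
        = ENNReal.ofReal (q * p * p) := by
      rw [← ENNReal.ofReal_mul hq0, ← ENNReal.ofReal_mul (mul_nonneg hq0 hp0.le)]
    have e2 : ENNReal.ofReal q * ENNReal.ofReal (1 - p) * ENNReal.ofReal (1 - p)
        = ENNReal.ofReal (q * (1 - p) * (1 - p)) := by
      rw [← ENNReal.ofReal_mul hq0, ← ENNReal.ofReal_mul (mul_nonneg hq0 h1p)]
    have e3 : ENNReal.ofReal (1 - q) * ENNReal.ofReal p * ENNReal.ofReal (1 - p)
        = ENNReal.ofReal ((1 - q) * p * (1 - p)) := by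
      rw [← ENNReal.ofReal_mul h1q, ← ENNReal.ofReal_mul (mul_nonneg h1q hp0.le)]
    have e4 : ENNReal.ofReal (1 - q) * ENNReal.ofReal (1 - p) * ENNReal.ofReal p
        = ENNReal.ofReal ((1 - q) * (1 - p) * p) := by
      rw [← ENNReal.ofReal_mul h1q, ← ENNReal.ofReal_mul (mul_nonneg h1q h1p)]
    rw [e1, e2, e3, e4,
      ← ENNReal.ofReal_add (by positivity) (by positivity),
      ← ENNReal.ofReal_add (by positivity) (by positivity),
      ← ENNReal.ofReal_add (by positivity) (by positivity)]
    congr 1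
    rw [hprb]
    ring
  set Y : Fin s → Ω → ℝ := fun i => (A i).indicator (fun _ => (1:ℝ)) with hY
  have hmeasA : ∀ i, MeasurableSet (A i) := by
    intro i
    rw [hAdec i]
    refine MeasurableSet.union ?_ (MeasurableSet.union ?_ (MeasurableSet.union ?_ ?_))
    · exact (((hr i) hmeasD).inter ((hf i) hm1)).inter ((hg i) hm1)
    · exact (((hr i) hmeasD).inter ((hf i) hm1.compl)).inter ((hg i) hm1.compl)
    · exact (((hr i) hmeasD.compl).inter ((hf i) hm1)).inter ((hg i) hm1.compl)
    · exact (((hr i) hmeasD.compl).inter ((hf i) hm1.compl)).inter ((hg i) hm1)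
  have hYmeas : ∀ i, Measurable (Y i) := fun i => measurable_const.indicator (hmeasA i)
  have hY01 : ∀ i ω, Y i ω = 0 ∨ Y i ω = 1 := by
    intro i ω
    by_cases h : ω ∈ A i <;> simp [hY, Set.indicator_apply, h]
  have hYmean : ∀ i, ∫ ω, Y i ω ∂P = prb := by
    intro i
    rw [hY]
    rw [MeasureTheory.integral_indicator_const (1:ℝ) (hmeasA i), measureReal_def, hPA i, smul_eq_mul, mul_one,
      ENNReal.toReal_ofReal hprb0]
  have hYgen : ∀ i, Measurable[MeasurableSpace.generateFrom (tripleBlocks r f g i)] (Y i) := by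
    intro i
    refine Measurable.indicator measurable_const ?_
    rw [hAdec i]
    refine MeasurableSet.union ?_ (MeasurableSet.union ?_ (MeasurableSet.union ?_ ?_))
    · exact MeasurableSpace.measurableSet_generateFrom ⟨D, {1}, {1}, hmeasD, hm1, hm1, rfl⟩
    · exact MeasurableSpace.measurableSet_generateFrom
        ⟨D, {1}ᶜ, {1}ᶜ, hmeasD, hm1.compl, hm1.compl, rfl⟩
    · exact MeasurableSpace.measurableSet_generateFrom
        ⟨Dᶜ, {1}, {1}ᶜ, hmeasD.compl, hm1, hm1.compl, rfl⟩
    · exact MeasurableSpace.measurableSet_generateFrom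
        ⟨Dᶜ, {1}ᶜ, {1}, hmeasD.compl, hm1.compl, hm1, rfl⟩
  have hYind : iIndepFun (m := fun _ : Fin s => (inferInstance : MeasurableSpace ℝ)) Y P :=
    iIndepFun_of_tripleBlocks r f g hr hf hg hindep Y hYgen
  set c : ℝ := (E - 1) / (E + 1) with hc
  have hc0 : 0 < c := by positivity
  set δ : ℝ := 2 * θ * c ^ 2 with hδd
  have hδ0 : 0 < δ := by positivity
  have hHam : ∀ ω, (dpbvHammingDist t r f g x₁ x₂ ω : ℝ) = ∑ i, Y i ω := by
    intro ω
    rw [dpbvHammingDist, Finset.card_filter]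
    push_cast
    refine Finset.sum_congr rfl fun i _ => ?_
    by_cases h : dpbvBit t (r i ω) x₁ (f i ω) ≠ dpbvBit t (r i ω) x₂ (g i ω) <;>
      simp [h, hY, Set.indicator_apply, hA, Set.mem_setOf_eq]
  set a : ℝ := (U - L + 2 * t) / (2 * (s:ℝ)) * ((E + 1) / (E - 1)) ^ 2 with ha
  have ha0 : 0 < a := by positivity
  have hkey : ∀ ω, dpbvEstimator t (U - L + 2 * t) ε r f g x₁ x₂ ω - d
      = a * ((∑ i, Y i ω) - (s:ℝ) * prb) := by
    intro ω
    have expand : a * ((s:ℝ) * prb) = (U - L + 2 * t) * E / (E - 1) ^ 2 + d := by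
      rw [ha, hprb, hq, hp]
      field_simp
      ring
    rw [dpbvEstimator, hHam ω, mul_sub, expand, ← hE, ha]
    ring
  have hts : θ * (U - L + 2 * t) = a * ((s:ℝ) * δ) := by
    rw [ha, hδd, hc]
    field_simp
  have hsetEq : {ω | θ * (U - L + 2 * t)
        ≤ |dpbvEstimator t (U - L + 2 * t) ε r f g x₁ x₂ ω - d|}
      = {ω | (s:ℝ) * δ ≤ |(∑ i, Y i ω) - (s:ℝ) * prb|} := by
    ext ω
    simp only [Set.mem_setOf_eq]
    rw [hkey ω, abs_mul, abs_of_pos ha0, hts]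
    exact mul_le_mul_iff_right₀ ha0
  rw [hsetEq]
  refine le_trans (dpbv_hoeffding_two_side P Y hYmeas hY01 hprb0 hprb1 hYmean hYind hδ0) ?_
  apply le_of_eq
  congr 2
  rw [hδd, hc]
  ring
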